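/- Let p be prime, q, t natural numbers, and J_t the q-color compatibility matrix of a perfect matching with t edges (J_t[x,y] = 1 if x(i) ≠ y(i) for all i, else 0, indexed by x,y : Fin t → Fin q). Then the rank of J_t over F_p equals (q−1)^t if p divides q−1, and equals q^t otherwise. -/

import Mathlib

open Finset

lemma coord_sum' (p q : ℕ) [Fact p.Prime] (a c : Fin q) :
    ∑ b : Fin q, (if a ≠ b then (1 : ZMod p) else 0) *
        (if b ≠ c then (1 : ZMod p) else 2 - (q : ZMod p)) =
      ((q : ZMod p) - 1) * (if a = c then 1 else 0) := by
  have hq1 : 1 ≤ q := a.pos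
  by_cases hac : a = c
  · subst hac
    rw [← Finset.add_sum_erase univ _ (mem_univ a)]
    simp only [ne_eq, not_true_eq_false, if_false, zero_mul, zero_add, if_pos rfl, mul_one]
    rw [Finset.sum_congr rfl (fun b hb => ?_), Finset.sum_const, card_erase_of_mem (mem_univ a),
      card_univ, Fintype.card_fin, nsmul_eq_mul, mul_one]
    · push_cast [Nat.cast_sub hq1]; ring
    · have hba : b ≠ a := (mem_erase.mp hb).1
      rw [if_pos (Ne.symm hba), if_pos hba, one_mul]
  · have hq2 : 2 ≤ q := by
      by_contra h
      interval_cases q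
      exact hac (Subsingleton.elim a c)
    have hc : c ∈ univ.erase a := mem_erase.mpr ⟨Ne.symm hac, mem_univ c⟩
    rw [← Finset.add_sum_erase univ _ (mem_univ a), ← Finset.add_sum_erase _ _ hc]
    simp only [ne_eq, not_true_eq_false, if_false, zero_mul, zero_add, if_neg hac]
    rw [if_pos hac, one_mul, Finset.sum_congr rfl (fun b hb => ?_), Finset.sum_const,
      card_erase_of_mem hc, card_erase_of_mem (mem_univ a), card_univ, Fintype.card_fin,
      nsmul_eq_mul, mul_one]
    · push_cast [Nat.cast_sub hq2, Nat.cast_sub (by omega : 1 ≤ q - 1),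
        Nat.cast_sub hq1]; ring
    · obtain ⟨hbc, hb⟩ := mem_erase.mp hb
      have hba : b ≠ a := (mem_erase.mp hb).1
      rw [if_pos (Ne.symm hba), if_pos hbc, one_mul]

lemma J_eq_prod' (p q t : ℕ) [Fact p.Prime] (x y : Fin t → Fin q) :
    (if ∀ i, x i ≠ y i then (1 : ZMod p) else 0) =
      ∏ i, (if x i ≠ y i then (1 : ZMod p) else 0) := by
  by_cases h : ∀ i, x i ≠ y i
  · rw [if_pos h]
    exact (Finset.prod_eq_one fun i _ => if_pos (h i)).symm
  · rw [if_neg h]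
    push_neg at h
    obtain ⟨i, hi⟩ := h
    exact (Finset.prod_eq_zero (mem_univ i) (by rw [if_neg (by simpa using hi)])).symm

lemma key_mul' (p q t : ℕ) [Fact p.Prime]
    (J : Matrix (Fin t → Fin q) (Fin t → Fin q) (ZMod p))
    (hJ : ∀ x y, J x y = if ∀ i, x i ≠ y i then 1 else 0) :
    J * (Matrix.of fun x y => ∏ i,
        (if x i ≠ y i then (1 : ZMod p) else 2 - (q : ZMod p))) =
      ((q : ZMod p) - 1) ^ t • 1 := by
  ext x z
  rw [Matrix.mul_apply]
  simp only [Matrix.of_apply, hJ]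
  calc ∑ y : Fin t → Fin q, (if ∀ i, x i ≠ y i then (1:ZMod p) else 0) *
          ∏ i, (if y i ≠ z i then (1 : ZMod p) else 2 - (q : ZMod p))
      = ∑ y : Fin t → Fin q, ∏ i, ((if x i ≠ y i then (1:ZMod p) else 0) *
          (if y i ≠ z i then (1 : ZMod p) else 2 - (q : ZMod p))) := by
        refine Finset.sum_congr rfl fun y _ => ?_
        rw [J_eq_prod', Finset.prod_mul_distrib]
    _ = ∏ i, ∑ b : Fin q, ((if x i ≠ b then (1:ZMod p) else 0) *
          (if b ≠ z i then (1 : ZMod p) else 2 - (q : ZMod p))) := by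
        rw [Finset.prod_univ_sum, Fintype.piFinset_univ]
    _ = ∏ i, ((q : ZMod p) - 1) * (if x i = z i then 1 else 0) :=
        Finset.prod_congr rfl fun i _ => coord_sum' p q (x i) (z i)
    _ = ((q : ZMod p) - 1) ^ t * (if x = z then 1 else 0) := by
        rw [Finset.prod_mul_distrib, Finset.prod_const, card_univ, Fintype.card_fin]
        congr 1
        by_cases hxz : x = z
        · subst hxz; simp
        · rw [if_neg hxz]
          obtain ⟨i, hi⟩ := Function.ne_iff.mp hxz
          exact Finset.prod_eq_zero (mem_univ i) (if_neg hi)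
    _ = (((q : ZMod p) - 1) ^ t • (1 : Matrix (Fin t → Fin q) (Fin t → Fin q) (ZMod p))) x z := by
        rw [Matrix.smul_apply, Matrix.one_apply, smul_eq_mul]

lemma key_unit' (p q t : ℕ) [Fact p.Prime]
    (J : Matrix (Fin t → Fin q) (Fin t → Fin q) (ZMod p))
    (hJ : ∀ x y, J x y = if ∀ i, x i ≠ y i then 1 else 0)
    (hq : (q : ZMod p) - 1 ≠ 0) : IsUnit J := by
  have h := key_mul' p q t J hJ
  have hc : ((q : ZMod p) - 1) ^ t ≠ 0 := pow_ne_zero _ hq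
  refine (Matrix.isUnit_iff_isUnit_det _).mpr <| Matrix.isUnit_det_of_right_inverse (B := (((q : ZMod p) - 1) ^ t)⁻¹ •
    (Matrix.of fun x y => ∏ i, (if x i ≠ y i then (1 : ZMod p) else 2 - (q : ZMod p)))) ?_
  rw [Matrix.mul_smul, h, smul_smul, inv_mul_cancel₀ hc, one_smul]

lemma coord2' (p r : ℕ) [Fact p.Prime] (hr : (r : ZMod p) = 0) (a y : Fin (r+1)) :
    ∑ b : Fin r, (if a = b.castSucc then (1:ZMod p) else if (a:ℕ) = r then -1 else 0) *
      (if b.castSucc ≠ y then (1:ZMod p) else 0) = if a ≠ y then 1 else 0 := by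
  rcases lt_or_eq_of_le (Nat.lt_succ_iff.mp a.isLt) with h | h
  · set b₀ : Fin r := ⟨a.val, h⟩ with hb₀
    have hab : a = b₀.castSucc := Fin.ext rfl
    have har : (a : ℕ) ≠ r := Nat.ne_of_lt h
    calc ∑ b : Fin r, (if a = b.castSucc then (1:ZMod p) else if (a:ℕ) = r then -1 else 0) *
          (if b.castSucc ≠ y then (1:ZMod p) else 0)
        = ∑ b : Fin r, (if b = b₀ then (if b.castSucc ≠ y then (1:ZMod p) else 0) else 0) := by
          refine Finset.sum_congr rfl fun b _ => ?_
          by_cases hb : b = b₀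
          · subst hb; rw [if_pos hab, if_pos rfl, one_mul]
          · rw [if_neg, if_neg hb, if_neg har, zero_mul]
            rw [hab]
            exact fun hc => hb (Fin.castSucc_injective _ hc.symm)
      _ = (if b₀.castSucc ≠ y then (1:ZMod p) else 0) := by
          rw [Finset.sum_ite_eq' univ b₀]; simp
      _ = if a ≠ y then 1 else 0 := by rw [hab]
  · have hcoeff : ∀ b : Fin r,
        (if a = b.castSucc then (1:ZMod p) else if (a:ℕ) = r then -1 else 0) = -1 := by
      intro b
      rw [if_neg, if_pos h]
      intro hc
      have hb := b.isLt
      rw [hc, Fin.coe_castSucc] at h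
      omega
    simp only [hcoeff, neg_one_mul, Finset.sum_neg_distrib]
    by_cases hy : (y:ℕ) = r
    · have hay : a = y := Fin.ext (h.trans hy.symm)
      rw [if_neg (by simp [hay])]
      have : ∀ b : Fin r, (if b.castSucc ≠ y then (1:ZMod p) else 0) = 1 := by
        intro b
        rw [if_pos]
        intro hc
        have hb := b.isLt
        rw [← hc, Fin.coe_castSucc] at hy
        omega
      simp only [this, Finset.sum_const, card_univ, Fintype.card_fin, nsmul_eq_mul, mul_one, hr,
        neg_zero]
    · have hyr : (y:ℕ) < r := by have := y.isLt; omega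
      set y₀ : Fin r := ⟨y.val, hyr⟩ with hy₀
      have hyy : y = y₀.castSucc := Fin.ext rfl
      have hay : a ≠ y := by
        intro hc; rw [hc] at h; exact hy h
      rw [if_pos hay]
      have hmem : y₀ ∈ (univ : Finset (Fin r)) := mem_univ y₀
      rw [← Finset.add_sum_erase univ _ hmem]
      rw [if_neg (by rw [hyy]; simp)]
      rw [Finset.sum_congr rfl (fun b hb => ?_), Finset.sum_const,
        card_erase_of_mem hmem, card_univ, Fintype.card_fin, nsmul_eq_mul, mul_one]
      · have hr1 : 1 ≤ r := by omega
        rw [Nat.cast_sub hr1, hr, Nat.cast_one, zero_add]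
        ring
      · rw [if_pos]
        rw [hyy]
        intro hc
        exact (mem_erase.mp hb).1 (Fin.castSucc_injective _ hc)

/-- The rank over F_p of the compatibility matrix J_t of a perfect matching on t edges
with q colors is (q−1)^t if p divides q−1, and q^t otherwise. -/
theorem stmt4 (p q t : ℕ) [Fact p.Prime]
    (Jt : Matrix (Fin t → Fin q) (Fin t → Fin q) (ZMod p))
    (hJt : ∀ x y, Jt x y = if ∀ i, x i ≠ y i then 1 else 0) :
    ((p : ℤ) ∣ (q : ℤ) - 1 → Jt.rank = (q - 1) ^ t) ∧
    (¬ (p : ℤ) ∣ (q : ℤ) - 1 → Jt.rank = q ^ t) := by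
  have hp2 : 2 ≤ p := (Fact.out (p := p.Prime)).two_le
  constructor
  · intro hdvd
    have hq1 : 1 ≤ q := by
      by_contra h
      interval_cases q
      norm_num at hdvd
      have h1 : (p:ℤ) ∣ 1 := hdvd
      have := Int.le_of_dvd one_pos h1
      omega
    obtain ⟨r, rfl⟩ : ∃ r, q = r + 1 := ⟨q - 1, by omega⟩
    have hr0 : ((r:ℕ) : ZMod p) = 0 := by
      refine (ZMod.natCast_eq_zero_iff r p).mpr ?_
      have h2 := hdvd
      push_cast at h2
      have h3 : (p:ℤ) ∣ (r : ℤ) := by simpa using h2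
      exact_mod_cast h3
    -- selection matrix E
    set ι : (Fin t → Fin r) → (Fin t → Fin (r+1)) := fun z i => (z i).castSucc with hι
    set E : Matrix (Fin t → Fin r) (Fin t → Fin (r+1)) (ZMod p) :=
      Matrix.of fun z x => if ι z = x then 1 else 0 with hE
    have hEJ : ∀ z y, (E * Jt) z y = Jt (ι z) y := by
      intro z y
      rw [Matrix.mul_apply]
      simp only [hE, Matrix.of_apply, ite_mul, one_mul, zero_mul]
      rw [Finset.sum_ite_eq univ (ι z) (fun x => Jt x y), if_pos (mem_univ _)]
    have hAET : ∀ (A : Matrix (Fin t → Fin r) (Fin t → Fin (r+1)) (ZMod p)) x w,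
        (A * E.transpose) x w = A x (ι w) := by
      intro A x w
      rw [Matrix.mul_apply]
      simp only [Matrix.transpose_apply, hE, Matrix.of_apply, mul_ite, mul_one, mul_zero]
      rw [Finset.sum_ite_eq univ (ι w) (fun y => A x y), if_pos (mem_univ _)]
    -- lower bound
    have hS : ∀ z w, (E * Jt * E.transpose) z w = if ∀ i, z i ≠ w i then 1 else 0 := by
      intro z w
      rw [hAET, hEJ, hJt]
      congr 1
      simp only [eq_iff_iff, hι]
      constructor
      · intro hh i hc; exact hh i (by rw [hc])
      · intro hh i hc; exact hh i (Fin.castSucc_injective _ hc)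
    have hSunit : IsUnit (E * Jt * E.transpose) := by
      refine key_unit' p r t _ hS ?_
      rw [hr0, zero_sub]
      simp
    have hlow : r ^ t ≤ Jt.rank := by
      have h1 : (E * Jt * E.transpose).rank = r ^ t := by
        rw [Matrix.rank_of_isUnit _ hSunit]
        simp [Fintype.card_fun]
      calc r ^ t = (E * Jt * E.transpose).rank := h1.symm
        _ ≤ (E * Jt).rank := Matrix.rank_mul_le_left _ _
        _ ≤ Jt.rank := Matrix.rank_mul_le_right _ _
    -- upper bound
    set C : Matrix (Fin t → Fin (r+1)) (Fin t → Fin r) (ZMod p) :=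
      Matrix.of fun x z => ∏ i, (if x i = (z i).castSucc then (1:ZMod p)
        else if ((x i):ℕ) = r then -1 else 0) with hC
    have hfact : Jt = C * (E * Jt) := by
      ext x y
      rw [Matrix.mul_apply]
      calc Jt x y = if ∀ i, x i ≠ y i then 1 else 0 := hJt x y
        _ = ∏ i, ∑ b : Fin r, ((if x i = b.castSucc then (1:ZMod p)
              else if ((x i):ℕ) = r then -1 else 0) *
              (if b.castSucc ≠ y i then (1:ZMod p) else 0)) := by
            rw [J_eq_prod']
            exact (Finset.prod_congr rfl fun i _ => coord2' p r hr0 (x i) (y i)).symm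
        _ = ∑ z : Fin t → Fin r, ∏ i, ((if x i = (z i).castSucc then (1:ZMod p)
              else if ((x i):ℕ) = r then -1 else 0) *
              (if (z i).castSucc ≠ y i then (1:ZMod p) else 0)) := by
            rw [Finset.prod_univ_sum, Fintype.piFinset_univ]
        _ = ∑ z : Fin t → Fin r, C x z * (E * Jt) z y := by
            refine Finset.sum_congr rfl fun z _ => ?_
            rw [hEJ, hJt, hC, Matrix.of_apply, Finset.prod_mul_distrib, J_eq_prod']
    have hupp : Jt.rank ≤ r ^ t := by
      calc Jt.rank = (C * (E * Jt)).rank := by rw [← hfact]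
        _ ≤ (E * Jt).rank := Matrix.rank_mul_le_right _ _
        _ ≤ Fintype.card (Fin t → Fin r) := Matrix.rank_le_card_height _
        _ = r ^ t := by simp [Fintype.card_fun]
    have : Jt.rank = r ^ t := le_antisymm hupp hlow
    simpa using this
  · intro hdvd
    have hne : ((q : ZMod p) - 1) ≠ 0 := by
      intro h
      apply hdvd
      refine (ZMod.intCast_zmod_eq_zero_iff_dvd ((q:ℤ)-1) p).mp ?_
      push_cast
      exact h
    have hu := key_unit' p q t Jt hJt hne
    rw [Matrix.rank_of_isUnit _ hu]
    simp [Fintype.card_fun]
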